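/- Let d ≥ 3 be an integer and λ, c > 0. Define f : (0,∞) → ℝ by f(w) = Σ_{k=1}^∞ (λ/(2c))^{k(d−2)} w^{k(d−2)−2} / ( Γ(k(d/2 − 1)) · Γ((d−1)/2 + (d/2 − 1)k) ). Then f satisfies the non-homogeneous iterated hyper-Bessel ordinary differential equation T^{(d−2)} f (w) = (λ/c)^{2(d−2)} f(w) + (2λ/c)^{d−2} · w^{−d} / (√π · Γ(1 − d/2)) for all w > 0, where (T g)(w) = g''(w) + (d/w) g'(w), T^{(r)} denotes the r-fold iterate of T, and 1/Γ(1 − d/2) is interpreted as 0 when 1 − d/2 is a nonpositive integer (so the inhomogeneous term vanishes for all even d ≥ 4). -/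

import Mathlib

open Real
open Filter Finset Topology

lemma gamma_ge_sixth {y : ℝ} (hy : 1/2 ≤ y) : (1/6 : ℝ) ≤ Real.Gamma y := by
  have mono := Real.Gamma_strictMonoOn_Ici.monotoneOn
  rcases le_or_gt 2 y with h | h
  · have : Real.Gamma 2 ≤ Real.Gamma y := mono (by norm_num) (Set.mem_Ici.2 h) h
    rw [Real.Gamma_two] at this; linarith
  · have hy0 : (0:ℝ) < y := by linarith
    have h1 : Real.Gamma (y + 2) = (y+1) * (y * Real.Gamma y) := by
      have e1 : y + 2 = (y + 1) + 1 := by ring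
      rw [e1, Real.Gamma_add_one (by linarith), Real.Gamma_add_one (by linarith)]
    have h2 : Real.Gamma 2 ≤ Real.Gamma (y + 2) :=
      mono (by norm_num) (Set.mem_Ici.2 (by linarith)) (by linarith)
    rw [Real.Gamma_two, h1] at h2
    have hpos : 0 < Real.Gamma y := Real.Gamma_pos_of_pos hy0
    have h6 : (y+1)*y ≤ 6 := by nlinarith
    have h7 : (y+1)*(y*Real.Gamma y) ≤ 6 * Real.Gamma y := by nlinarith
    linarith

lemma gamma_ge_fact {y : ℝ} (n : ℕ) (hy : 1/2 ≤ y) (hn : (n:ℝ) ≤ y) :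
    (1/6 : ℝ) * (n-1).factorial ≤ Real.Gamma y := by
  rcases le_or_gt n 1 with h | h
  · interval_cases n <;> simpa using gamma_ge_sixth hy
  · have h2 : (2:ℝ) ≤ (n:ℝ) := by exact_mod_cast h
    have mono := Real.Gamma_strictMonoOn_Ici.monotoneOn
    have key : Real.Gamma (n:ℝ) ≤ Real.Gamma y :=
      mono (Set.mem_Ici.2 h2) (Set.mem_Ici.2 (by linarith)) hn
    have hg : Real.Gamma (n:ℝ) = ((n-1).factorial : ℝ) := by
      have e : ((n-1:ℕ):ℝ) + 1 = (n:ℝ) := by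
        rw [Nat.cast_sub (by omega)]; push_cast; ring
      rw [← e, Real.Gamma_nat_eq_factorial]
    rw [hg] at key
    linarith

lemma Gamma_shift {x : ℝ} (hx : ∀ m : ℕ, x + m ≠ 0) (n : ℕ) :
    Real.Gamma (x + n) = Real.Gamma x * ∏ i ∈ Finset.range n, (x + i) := by
  induction n with
  | zero => simp
  | succ n ih =>
    have e : x + (n+1 : ℕ) = (x + n) + 1 := by push_cast; ring
    rw [e, Real.Gamma_add_one (hx n), ih, Finset.prod_range_succ]; ring

lemma summable_poly_fact (M : ℕ) (t : ℝ) (ht : 0 ≤ t) :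
    Summable (fun m : ℕ => ((m:ℝ)+1)^M * t^m / (m.factorial : ℝ)) := by
  apply summable_of_ratio_norm_eventually_le (r := 1/2) (by norm_num)
  filter_upwards [Filter.eventually_ge_atTop (⌈(2:ℝ)^(M+1) * t⌉₊)] with m hm
  have hm' : (2:ℝ)^(M+1) * t ≤ (m:ℝ) := le_trans (Nat.le_ceil _) (by exact_mod_cast hm)
  have h1 : (0:ℝ) ≤ ((m:ℝ)+1)^M * t^m / (m.factorial : ℝ) := by positivity
  rw [Real.norm_of_nonneg (by positivity), Real.norm_of_nonneg h1]
  have hfact : ((m+1).factorial : ℝ) = ((m:ℝ)+1) * (m.factorial : ℝ) := by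
    rw [Nat.factorial_succ]; push_cast; ring
  have hfp : (0:ℝ) < (m.factorial : ℝ) := by positivity
  have hb : ((m:ℝ)+1+1)^M ≤ 2^M * ((m:ℝ)+1)^M := by
    rw [← mul_pow]; apply pow_le_pow_left₀ (by positivity); linarith
  push_cast [hfact]
  rw [← mul_div_assoc, div_le_div_iff₀ (by positivity) (by positivity)]
  have hP : (0:ℝ) ≤ ((m:ℝ)+1)^M * t^m * (m.factorial : ℝ) := by positivity
  have h2t : 2^M * t ≤ ((m:ℝ)+1)/2 := by
    have : (2:ℝ)^(M+1) * t = 2^M * t * 2 := by ring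
    nlinarith
  calc ((m:ℝ)+1+1)^M * t^(m+1) * (m.factorial : ℝ)
      ≤ (2^M * ((m:ℝ)+1)^M) * (t^m * t) * (m.factorial : ℝ) := by
        rw [pow_succ]
        exact mul_le_mul_of_nonneg_right
          (mul_le_mul hb le_rfl (by positivity) (by positivity)) hfp.le
    _ = (2^M * t) * (((m:ℝ)+1)^M * t^m * (m.factorial : ℝ)) := by ring
    _ ≤ (((m:ℝ)+1)/2) * (((m:ℝ)+1)^M * t^m * (m.factorial : ℝ)) :=
        mul_le_mul_of_nonneg_right h2t hP
    _ = 1/2 * (((m:ℝ)+1)^M * t^m) * (((m:ℝ)+1) * (m.factorial : ℝ)) := by ring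

set_option maxHeartbeats 1000000 in
lemma summable_poly_halffact (M : ℕ) (s : ℝ) (hs : 0 ≤ s) :
    Summable (fun k : ℕ => ((k:ℝ)+1)^M * s^k / (((k+1)/2).factorial : ℝ)) := by
  apply Summable.even_add_odd
  · refine Summable.of_nonneg_of_le (fun m => by positivity) (fun m => ?_)
      ((summable_poly_fact M (s^2) (by positivity)).mul_left (2^M))
    · 
      have he : (2*m+1)/2 = m := by omega
      rw [he]
      have h1 : ((2*m:ℕ):ℝ)+1 ≤ 2*((m:ℝ)+1) := by push_cast; linarith
      have h2 : s^(2*m) = (s^2)^m := by rw [← pow_mul]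
      rw [h2]
      have hP : (((2*m:ℕ):ℝ)+1)^M ≤ 2^M * ((m:ℝ)+1)^M := by
        have := pow_le_pow_left₀ (by positivity) h1 M
        rwa [mul_pow] at this
      calc (((2*m:ℕ):ℝ)+1)^M * (s^2)^m / (m.factorial : ℝ)
          ≤ (2^M * ((m:ℝ)+1)^M) * (s^2)^m / (m.factorial : ℝ) := by gcongr
        _ = 2^M * (((m:ℝ)+1)^M * (s^2)^m / (m.factorial : ℝ)) := by ring
  · refine Summable.of_nonneg_of_le (fun m => by positivity) (fun m => ?_)
      ((summable_poly_fact M (s^2) (by positivity)).mul_left (2^M * s))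
    · 
      have he : (2*m+1+1)/2 = m+1 := by omega
      rw [he]
      have h2 : s^(2*m+1) = s * (s^2)^m := by rw [pow_succ, ← pow_mul]; ring
      rw [h2]
      have h1 : ((2*m+1:ℕ):ℝ)+1 ≤ 2*((m:ℝ)+1) := by push_cast; linarith
      have hP : (((2*m+1:ℕ):ℝ)+1)^M ≤ 2^M * ((m:ℝ)+1)^M := by
        have := pow_le_pow_left₀ (by positivity) h1 M
        rwa [mul_pow] at this
      have hfle : (m.factorial : ℝ) ≤ ((m+1).factorial : ℝ) := by
        exact_mod_cast Nat.factorial_le (Nat.le_succ m)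
      have hfp : (0:ℝ) < (m.factorial : ℝ) := by positivity
      have hfp1 : (0:ℝ) < ((m+1).factorial : ℝ) := by positivity
      calc (((2*m+1:ℕ):ℝ)+1)^M * (s * (s^2)^m) / ((m+1).factorial : ℝ)
          ≤ (2^M * ((m:ℝ)+1)^M) * (s * (s^2)^m) / ((m+1).factorial : ℝ) := by
            gcongr
        _ ≤ (2^M * ((m:ℝ)+1)^M) * (s * (s^2)^m) / (m.factorial : ℝ) := by
            apply div_le_div_of_nonneg_left (by positivity) hfp hfle
        _ = (2^M * s) * (((m:ℝ)+1)^M * (s^2)^m / (m.factorial : ℝ)) := by ring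

lemma masterSummable (d : ℕ) (hd : 3 ≤ d) (M : ℕ) (s : ℝ) (hs : 0 ≤ s) :
    Summable (fun k : ℕ => ((k:ℝ)+1)^M * s^k /
      (Real.Gamma (((k:ℝ)+1)*((d:ℝ)/2-1)) *
        Real.Gamma (((d:ℝ)-1)/2 + ((d:ℝ)/2-1)*((k:ℝ)+1)))) := by
  have hd3 : (3:ℝ) ≤ (d:ℝ) := by exact_mod_cast hd
  have hα : (1/2:ℝ) ≤ (d:ℝ)/2 - 1 := by linarith
  refine Summable.of_nonneg_of_le (fun k => ?_) (fun k => ?_)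
    ((summable_poly_halffact M s hs).mul_left 36)
  · have h1 := Real.Gamma_nonneg_of_nonneg (s := ((k:ℝ)+1)*((d:ℝ)/2-1))
      (mul_nonneg (by positivity) (by linarith))
    have h2 := Real.Gamma_nonneg_of_nonneg (s := ((d:ℝ)-1)/2 + ((d:ℝ)/2-1)*((k:ℝ)+1))
      (by nlinarith)
    positivity
  · have hk1 : (1:ℝ) ≤ (k:ℝ)+1 := by
      have : (0:ℝ) ≤ k := Nat.cast_nonneg k
      linarith
    have hz : (1/2:ℝ) ≤ ((k:ℝ)+1)*((d:ℝ)/2-1) := by nlinarith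
    have hG1 : (1/6:ℝ) ≤ Real.Gamma (((k:ℝ)+1)*((d:ℝ)/2-1)) := gamma_ge_sixth hz
    set n : ℕ := (k+3)/2 with hn
    have hyk : ((k:ℝ)+3)/2 ≤ ((d:ℝ)-1)/2 + ((d:ℝ)/2-1)*((k:ℝ)+1) := by nlinarith
    have hncast : ((n:ℕ):ℝ) ≤ ((k:ℝ)+3)/2 := by
      have h1 : ((n:ℕ):ℝ) ≤ ((k:ℝ)+3)/2 := by
        rw [hn]
        have := Nat.cast_div_le (m := k+3) (n := 2) (α := ℝ)
        push_cast at this ⊢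
        linarith
      exact h1
    have hG2 : (1/6:ℝ) * ((n-1).factorial : ℝ) ≤
        Real.Gamma (((d:ℝ)-1)/2 + ((d:ℝ)/2-1)*((k:ℝ)+1)) :=
      gamma_ge_fact n (by nlinarith) (le_trans hncast hyk)
    have hnn : n - 1 = (k+1)/2 := by omega
    rw [hnn] at hG2
    have hfp : (0:ℝ) < (((k+1)/2).factorial : ℝ) := by positivity
    have hGpos1 : (0:ℝ) < Real.Gamma (((k:ℝ)+1)*((d:ℝ)/2-1)) := lt_of_lt_of_le (by norm_num) hG1
    have hGpos2 : (0:ℝ) < Real.Gamma (((d:ℝ)-1)/2 + ((d:ℝ)/2-1)*((k:ℝ)+1)) := by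
      calc (0:ℝ) < 1/6 * (((k+1)/2).factorial : ℝ) := by positivity
        _ ≤ _ := hG2
    calc ((k:ℝ)+1)^M * s^k / (Real.Gamma (((k:ℝ)+1)*((d:ℝ)/2-1)) *
          Real.Gamma (((d:ℝ)-1)/2 + ((d:ℝ)/2-1)*((k:ℝ)+1)))
        ≤ ((k:ℝ)+1)^M * s^k / ((1/6) * ((1/6) * (((k+1)/2).factorial : ℝ))) :=
          div_le_div_of_nonneg_left (by positivity) (by positivity)
            (mul_le_mul hG1 hG2 (by positivity) hGpos1.le)
      _ = 36 * (((k:ℝ)+1)^M * s^k / (((k+1)/2).factorial : ℝ)) := by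
          field_simp; ring

lemma hasDerivAt_tsum_rpow (b ρ : ℕ → ℝ)
    (H : ∀ (N : ℕ) (t : ℝ), 0 < t → Summable (fun k => |b k| * (|ρ k| + 1) ^ N * t ^ ρ k))
    {w : ℝ} (hw : 0 < w) :
    HasDerivAt (fun x : ℝ => ∑' k, b k * x ^ ρ k)
      (∑' k, b k * (ρ k * w ^ (ρ k - 1))) w := by
  have hl : 0 < w/2 := by linarith
  have hu : 0 < 2*w := by linarith
  have hwmem : w ∈ Set.Ioo (w/2) (2*w) := ⟨by linarith, by linarith⟩
  have husum : Summable (fun k => |b k| * (|ρ k|+1)^1 * (w/2) ^ ρ k * (w/2)⁻¹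
      + |b k| * (|ρ k|+1)^1 * (2*w) ^ ρ k * (2*w)⁻¹) :=
    ((H 1 (w/2) hl).mul_right _).add ((H 1 (2*w) hu).mul_right _)
  refine hasDerivAt_tsum_of_isPreconnected (g := fun k x => b k * x ^ ρ k)
    (g' := fun k y => b k * (ρ k * y ^ (ρ k - 1))) husum (isOpen_Ioo (a := w/2) (b := 2*w))
    (convex_Ioo _ _).isPreconnected (fun k y hy => ?_) (fun k y hy => ?_) hwmem ?_ hwmem
  · exact (Real.hasDerivAt_rpow_const (p := ρ k)
      (Or.inl (ne_of_gt (lt_trans hl hy.1)))).const_mul (b k)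
  · have hy0 : 0 < y := lt_trans hl hy.1
    have hbound : y ^ (ρ k - 1) ≤ (w/2) ^ (ρ k - 1) + (2*w) ^ (ρ k - 1) := by
      rcases le_or_gt 0 (ρ k - 1) with h | h
      · have : y ^ (ρ k - 1) ≤ (2*w) ^ (ρ k - 1) :=
          Real.rpow_le_rpow hy0.le hy.2.le h
        have h2 : (0:ℝ) ≤ (w/2) ^ (ρ k - 1) := Real.rpow_nonneg hl.le _
        linarith
      · have : y ^ (ρ k - 1) ≤ (w/2) ^ (ρ k - 1) :=
          Real.rpow_le_rpow_of_nonpos hl hy.1.le h.le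
        have h2 : (0:ℝ) ≤ (2*w) ^ (ρ k - 1) := Real.rpow_nonneg hu.le _
        linarith
    have e1 : (w/2) ^ (ρ k - 1) = (w/2) ^ ρ k * (w/2)⁻¹ := by
      rw [Real.rpow_sub hl, Real.rpow_one, div_eq_mul_inv]
    have e2 : (2*w) ^ (ρ k - 1) = (2*w) ^ ρ k * (2*w)⁻¹ := by
      rw [Real.rpow_sub hu, Real.rpow_one, div_eq_mul_inv]
    have hnorm : ‖b k * (ρ k * y ^ (ρ k - 1))‖ = |b k| * |ρ k| * y ^ (ρ k - 1) := by
      rw [Real.norm_eq_abs, abs_mul, abs_mul, abs_of_nonneg (Real.rpow_nonneg hy0.le _)]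
      ring
    rw [hnorm]
    calc |b k| * |ρ k| * y ^ (ρ k - 1)
        ≤ |b k| * (|ρ k|+1) * ((w/2) ^ (ρ k - 1) + (2*w) ^ (ρ k - 1)) := by
          apply mul_le_mul (by nlinarith [abs_nonneg (b k), abs_nonneg (ρ k)]) hbound
            (Real.rpow_nonneg hy0.le _) (by positivity)
      _ = |b k| * (|ρ k|+1)^1 * (w/2) ^ ρ k * (w/2)⁻¹
          + |b k| * (|ρ k|+1)^1 * (2*w) ^ ρ k * (2*w)⁻¹ := by
          rw [e1, e2]; ring
  · refine Summable.of_norm_bounded (H 0 w hw) (fun k => ?_)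
    rw [Real.norm_eq_abs, abs_mul, abs_of_nonneg (Real.rpow_nonneg hw.le _), pow_zero]
    ring_nf
    exact le_rfl

lemma Hstep (b ρ : ℕ → ℝ)
    (H : ∀ (N : ℕ) (t : ℝ), 0 < t → Summable (fun k => |b k| * (|ρ k| + 1) ^ N * t ^ ρ k)) :
    ∀ (N : ℕ) (t : ℝ), 0 < t →
      Summable (fun k => |b k * ρ k| * (|ρ k - 1| + 1) ^ N * t ^ (ρ k - 1)) := by
  intro N t ht
  refine Summable.of_nonneg_of_le (fun k => by positivity) (fun k => ?_)
    (((H (N+1) t ht).mul_left ((2:ℝ)^N * t⁻¹)))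
  have e : t ^ (ρ k - 1) = t ^ ρ k * t⁻¹ := by
    rw [Real.rpow_sub ht, Real.rpow_one, div_eq_mul_inv]
  rw [e, abs_mul]
  have h1 : |ρ k - 1| + 1 ≤ 2 * (|ρ k| + 1) := by
    have h2 : |ρ k - 1| ≤ |ρ k| + 1 := by
      calc |ρ k - 1| ≤ |ρ k| + |(1:ℝ)| := abs_sub (ρ k) 1
        _ = |ρ k| + 1 := by rw [abs_one]
    have := abs_nonneg (ρ k)
    linarith
  have h1N : (|ρ k - 1| + 1)^N ≤ 2^N * (|ρ k| + 1)^N := by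
    have := pow_le_pow_left₀ (by positivity) h1 N
    rwa [mul_pow] at this
  calc |b k| * |ρ k| * (|ρ k - 1| + 1)^N * (t ^ ρ k * t⁻¹)
      ≤ |b k| * (|ρ k| + 1) * (2^N * (|ρ k| + 1)^N) * (t ^ ρ k * t⁻¹) := by
        apply mul_le_mul_of_nonneg_right _ (by positivity)
        apply mul_le_mul _ h1N (by positivity) (by positivity)
        nlinarith [abs_nonneg (b k), abs_nonneg (ρ k)]
      _ = (2:ℝ)^N * t⁻¹ * (|b k| * (|ρ k| + 1)^(N+1) * t ^ ρ k) := by ring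

noncomputable def sRho (d j k : ℕ) : ℝ := ((k:ℝ)+1) * ((d:ℝ)-2) - 2 - 2*(j:ℝ)

noncomputable def sC (d : ℕ) : ℕ → ℕ → ℝ
  | 0, _ => 1
  | j+1, k => sC d j k * (sRho d j k * (sRho d j k + (d:ℝ) - 1))

noncomputable def sA (lam c : ℝ) (d k : ℕ) : ℝ :=
  (lam / (2*c)) ^ ((k+1)*(d-2)) /
    (Real.Gamma (((k:ℝ)+1)*((d:ℝ)/2-1)) *
      Real.Gamma (((d:ℝ)-1)/2 + ((d:ℝ)/2-1)*((k:ℝ)+1)))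

lemma sC_bound (d : ℕ) (hd : 3 ≤ d) (j k : ℕ) :
    |sC d j k| ≤ ((3*(d:ℝ)+2*(j:ℝ)+2) * ((k:ℝ)+1))^(2*j) := by
  induction j with
  | zero => simp [sC]
  | succ j ih =>
    have hk0 : (0:ℝ) ≤ (k:ℝ) := Nat.cast_nonneg k
    have hd3 : (3:ℝ) ≤ (d:ℝ) := by exact_mod_cast hd
    have hj0 : (0:ℝ) ≤ (j:ℝ) := Nat.cast_nonneg j
    set B : ℝ := (3*(d:ℝ)+2*((j:ℕ)+1:ℕ)+2) * ((k:ℝ)+1) with hB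
    have hBpos : 0 < B := by rw [hB]; push_cast; positivity
    have hBcast : B = (3*(d:ℝ)+2*(j:ℝ)+4) * ((k:ℝ)+1) := by rw [hB]; push_cast; ring
    have hmono : ((3*(d:ℝ)+2*(j:ℝ)+2) * ((k:ℝ)+1))^(2*j) ≤ B^(2*j) := by
      apply pow_le_pow_left₀ (by positivity)
      rw [hBcast]; nlinarith
    have hrho : |sRho d j k| ≤ B := by
      rw [hBcast, sRho]
      have h1 : |((k:ℝ)+1) * ((d:ℝ)-2) - 2 - 2*(j:ℝ)| ≤ ((k:ℝ)+1)*((d:ℝ)-2) + 2 + 2*(j:ℝ) := by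
        rw [abs_le]; constructor <;> nlinarith
      nlinarith
    have hrho2 : |sRho d j k + (d:ℝ) - 1| ≤ B := by
      rw [hBcast, sRho]
      have h1 : |((k:ℝ)+1) * ((d:ℝ)-2) - 2 - 2*(j:ℝ) + (d:ℝ) - 1| ≤
          ((k:ℝ)+1)*((d:ℝ)-2) + 2 + 2*(j:ℝ) + (d:ℝ) + 1 := by
        rw [abs_le]; constructor <;> nlinarith
      nlinarith
    calc |sC d (j+1) k| = |sC d j k| * (|sRho d j k| * |sRho d j k + (d:ℝ) - 1|) := by
          rw [show sC d (j+1) k = sC d j k * (sRho d j k * (sRho d j k + (d:ℝ) - 1)) from rfl,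
            abs_mul, abs_mul]
      _ ≤ B^(2*j) * (B * B) := by
          apply mul_le_mul (le_trans ih hmono)
            (mul_le_mul hrho hrho2 (abs_nonneg _) hBpos.le) (by positivity) (by positivity)
      _ = B^(2*(j+1)) := by ring
    
lemma sRho_abs_bound (d : ℕ) (hd : 3 ≤ d) (j k : ℕ) :
    |sRho d j k| + 1 ≤ (3*(d:ℝ)+2*(j:ℝ)+2) * ((k:ℝ)+1) := by
  have hk0 : (0:ℝ) ≤ (k:ℝ) := Nat.cast_nonneg k
  have hd3 : (3:ℝ) ≤ (d:ℝ) := by exact_mod_cast hd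
  have hj0 : (0:ℝ) ≤ (j:ℝ) := Nat.cast_nonneg j
  rw [sRho]
  have h1 : |((k:ℝ)+1) * ((d:ℝ)-2) - 2 - 2*(j:ℝ)| ≤ ((k:ℝ)+1)*((d:ℝ)-2) + 2 + 2*(j:ℝ) := by
    rw [abs_le]; constructor <;> nlinarith
  nlinarith

lemma Hm (d : ℕ) (hd : 3 ≤ d) (lam c : ℝ) (hlam : 0 < lam) (hc : 0 < c) (j : ℕ) :
    ∀ (N : ℕ) (t : ℝ), 0 < t →
      Summable (fun k => |sA lam c d k * sC d j k| * (|sRho d j k| + 1) ^ N * t ^ sRho d j k) := by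
  intro N t ht
  have hd3 : (3:ℝ) ≤ (d:ℝ) := by exact_mod_cast hd
  set X : ℝ := lam / (2*c) with hX
  have hXpos : 0 < X := by rw [hX]; positivity
  set s : ℝ := X^(d-2) * t^((d:ℝ)-2) with hs
  have hspos : 0 < s := by
    rw [hs]; exact mul_pos (pow_pos hXpos _) (Real.rpow_pos_of_pos ht _)
  set B : ℕ → ℝ := fun k => (3*(d:ℝ)+2*(j:ℝ)+2) * ((k:ℝ)+1) with hBdef
  set Cst : ℝ := X^(d-2) * t^((d:ℝ)-4-2*(j:ℝ)) * ((3*(d:ℝ)+2*(j:ℝ)+2))^(2*j+N) with hCst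
  refine Summable.of_nonneg_of_le (fun k => by positivity) (fun k => ?_)
    ((masterSummable d hd (2*j+N) s hspos.le).mul_left Cst)
  have hk0 : (0:ℝ) ≤ (k:ℝ) := Nat.cast_nonneg k
  have hΓ1 : 0 < Real.Gamma (((k:ℝ)+1)*((d:ℝ)/2-1)) :=
    Real.Gamma_pos_of_pos (by nlinarith)
  have hΓ2 : 0 < Real.Gamma (((d:ℝ)-1)/2 + ((d:ℝ)/2-1)*((k:ℝ)+1)) :=
    Real.Gamma_pos_of_pos (by nlinarith)
  have hsA : |sA lam c d k| = X^((k+1)*(d-2)) /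
      (Real.Gamma (((k:ℝ)+1)*((d:ℝ)/2-1)) *
        Real.Gamma (((d:ℝ)-1)/2 + ((d:ℝ)/2-1)*((k:ℝ)+1))) := by
    rw [sA, abs_div, abs_of_nonneg (by positivity), abs_of_nonneg (by positivity)]
  have hexp : t ^ sRho d j k = t^((d:ℝ)-4-2*(j:ℝ)) * (t^((d:ℝ)-2))^k := by
    have e1 : sRho d j k = ((d:ℝ)-4-2*(j:ℝ)) + ((d:ℝ)-2)*(k:ℝ) := by rw [sRho]; ring
    rw [e1, Real.rpow_add ht, Real.rpow_mul ht.le, Real.rpow_natCast]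
  have hXsplit : X^((k+1)*(d-2)) = X^(d-2) * (X^(d-2))^k := by
    rw [← pow_mul, ← pow_add]
    congr 1
    ring
  have hcb := sC_bound d hd j k
  have hrb := sRho_abs_bound d hd j k
  have hBnn : (0:ℝ) ≤ (3*(d:ℝ)+2*(j:ℝ)+2) * ((k:ℝ)+1) := by positivity
  have hpows : |sC d j k| * (|sRho d j k| + 1)^N ≤
      ((3*(d:ℝ)+2*(j:ℝ)+2))^(2*j+N) * ((k:ℝ)+1)^(2*j+N) := by
    calc |sC d j k| * (|sRho d j k| + 1)^N
        ≤ ((3*(d:ℝ)+2*(j:ℝ)+2) * ((k:ℝ)+1))^(2*j) *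
          ((3*(d:ℝ)+2*(j:ℝ)+2) * ((k:ℝ)+1))^N := by
          apply mul_le_mul hcb (pow_le_pow_left₀ (by positivity) hrb N)
            (by positivity) (by positivity)
      _ = _ := by rw [← pow_add, mul_pow]
  calc |sA lam c d k * sC d j k| * (|sRho d j k| + 1) ^ N * t ^ sRho d j k
      = (X^(d-2) * (X^(d-2))^k * t^((d:ℝ)-4-2*(j:ℝ)) * (t^((d:ℝ)-2))^k /
          (Real.Gamma (((k:ℝ)+1)*((d:ℝ)/2-1)) *
            Real.Gamma (((d:ℝ)-1)/2 + ((d:ℝ)/2-1)*((k:ℝ)+1)))) *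
        (|sC d j k| * (|sRho d j k| + 1)^N) := by
        rw [abs_mul, hsA, hexp, hXsplit]; ring
    _ ≤ (X^(d-2) * (X^(d-2))^k * t^((d:ℝ)-4-2*(j:ℝ)) * (t^((d:ℝ)-2))^k /
          (Real.Gamma (((k:ℝ)+1)*((d:ℝ)/2-1)) *
            Real.Gamma (((d:ℝ)-1)/2 + ((d:ℝ)/2-1)*((k:ℝ)+1)))) *
        (((3*(d:ℝ)+2*(j:ℝ)+2))^(2*j+N) * ((k:ℝ)+1)^(2*j+N)) := by
        apply mul_le_mul_of_nonneg_left hpows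
        have h1 : (0:ℝ) < t^((d:ℝ)-4-2*(j:ℝ)) := Real.rpow_pos_of_pos ht _
        have h2 : (0:ℝ) < t^((d:ℝ)-2) := Real.rpow_pos_of_pos ht _
        positivity
    _ = Cst * (((k:ℝ)+1)^(2*j+N) * s^k /
          (Real.Gamma (((k:ℝ)+1)*((d:ℝ)/2-1)) *
            Real.Gamma (((d:ℝ)-1)/2 + ((d:ℝ)/2-1)*((k:ℝ)+1)))) := by
        rw [hCst, hs, mul_pow]
        ring

/-- The hyper-Bessel-type operator `T g (w) = g''(w) + (d/w) g'(w)`. -/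
noncomputable def hyperBesselT (d : ℕ) (g : ℝ → ℝ) : ℝ → ℝ :=
  fun w => deriv (deriv g) w + ((d : ℝ) / w) * deriv g w

lemma iter_formula (d : ℕ) (hd : 3 ≤ d) (lam c : ℝ) (hlam : 0 < lam) (hc : 0 < c)
    (f : ℝ → ℝ) (hf : ∀ w : ℝ, f w = ∑' k : ℕ, sA lam c d k * w ^ sRho d 0 k) :
    ∀ j : ℕ, ∀ x : ℝ, 0 < x →
      (hyperBesselT d)^[j] f x = ∑' k, (sA lam c d k * sC d j k) * x ^ sRho d j k := by
  intro j
  induction j with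
  | zero =>
    intro x hx
    rw [Function.iterate_zero_apply, hf x]
    exact tsum_congr fun k => by rw [show sC d 0 k = 1 from rfl]; ring
  | succ j ih =>
    intro x hx
    set b : ℕ → ℝ := fun k => sA lam c d k * sC d j k with hb
    set ρ : ℕ → ℝ := fun k => sRho d j k with hρ
    have Hj : ∀ (N : ℕ) (t : ℝ), 0 < t →
        Summable (fun k => |b k| * (|ρ k| + 1) ^ N * t ^ ρ k) := Hm d hd lam c hlam hc j
    have H1 := Hstep b ρ Hj
    set G : ℝ → ℝ := fun y => ∑' k, b k * y ^ ρ k with hG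
    set G1 : ℝ → ℝ := fun y => ∑' k, (b k * ρ k) * y ^ (ρ k - 1) with hG1
    have hGderiv : ∀ y : ℝ, 0 < y → HasDerivAt G (∑' k, b k * (ρ k * y ^ (ρ k - 1))) y :=
      fun y hy => hasDerivAt_tsum_rpow b ρ Hj hy
    have hG1deriv : ∀ y : ℝ, 0 < y →
        HasDerivAt G1 (∑' k, (b k * ρ k) * ((ρ k - 1) * y ^ (ρ k - 1 - 1))) y :=
      fun y hy => hasDerivAt_tsum_rpow (fun k => b k * ρ k) (fun k => ρ k - 1) H1 hy
    have hev : (hyperBesselT d)^[j] f =ᶠ[𝓝 x] G :=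
      eventuallyEq_of_mem (Ioi_mem_nhds hx) (fun y hy => ih y hy)
    have hevG : deriv G =ᶠ[𝓝 x] G1 :=
      eventuallyEq_of_mem (Ioi_mem_nhds hx) (fun y hy => by
        rw [(hGderiv y hy).deriv]
        exact tsum_congr fun k => (mul_assoc _ _ _).symm)
    have e1 : deriv ((hyperBesselT d)^[j] f) x = deriv G x := hev.deriv_eq
    have e2 : deriv (deriv ((hyperBesselT d)^[j] f)) x = deriv G1 x := by
      rw [(hev.deriv.trans hevG).deriv_eq]
    rw [Function.iterate_succ_apply', hyperBesselT, e1, e2, (hGderiv x hx).deriv,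
      (hG1deriv x hx).deriv]
    -- summability of each series at x
    have S1 : Summable (fun k => (b k * ρ k) * ((ρ k - 1) * x ^ (ρ k - 1 - 1))) := by
      have H2 := Hstep (fun k => b k * ρ k) (fun k => ρ k - 1) H1
      refine Summable.of_norm_bounded (H2 0 x hx) (fun k => le_of_eq ?_)
      simp only [Real.norm_eq_abs, pow_zero, mul_one, abs_mul,
        abs_of_nonneg (Real.rpow_nonneg hx.le (ρ k - 1 - 1))]
      ring
    have S2 : Summable (fun k => ((d:ℝ)/x) * (b k * (ρ k * x ^ (ρ k - 1)))) := by
      apply Summable.mul_left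
      refine Summable.of_norm_bounded (H1 0 x hx) (fun k => le_of_eq ?_)
      simp only [Real.norm_eq_abs, pow_zero, mul_one, abs_mul,
        abs_of_nonneg (Real.rpow_nonneg hx.le (ρ k - 1))]
      ring
    rw [← tsum_mul_left (a := (d:ℝ)/x), ← Summable.tsum_add S1 S2]
    refine tsum_congr fun k => ?_
    have hx' : x ≠ 0 := hx.ne'
    have erho : sRho d (j+1) k = ρ k - 2 := by
      rw [hρ]; simp only [sRho]; push_cast; ring
    have esC : sC d (j+1) k = sC d j k * (ρ k * (ρ k + (d:ℝ) - 1)) := rfl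
    have epow1 : x ^ (ρ k - 1 - 1) = x ^ (ρ k - 2) := by
      rw [show ρ k - 1 - 1 = ρ k - 2 from by ring]
    have epow2 : x ^ (ρ k - 1) = x ^ (ρ k - 2) * x := by
      rw [show ρ k - 1 = (ρ k - 2) + 1 from by ring, Real.rpow_add hx, Real.rpow_one]
    rw [erho, esC, epow1, epow2]
    field_simp
    ring

lemma sC_prod (d : ℕ) (j k : ℕ) :
    sC d j k = ∏ i ∈ Finset.range j, (sRho d i k * (sRho d i k + (d:ℝ) - 1)) := by
  induction j with
  | zero => simp [sC]
  | succ j ih => rw [Finset.prod_range_succ, ← ih]; rfl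

lemma sC_form (d : ℕ) (hd : 3 ≤ d) (k : ℕ) :
    sC d (d-2) k = 4^(d-2) *
      (∏ i ∈ Finset.range (d-2), ((((k:ℝ)+1)*((d:ℝ)/2-1) - ((d:ℝ)-2)) + i)) *
      (∏ i ∈ Finset.range (d-2), ((((d:ℝ)-1)/2 + ((d:ℝ)/2-1)*((k:ℝ)+1) - ((d:ℝ)-2)) + i)) := by
  have hd2 : 2 ≤ d := by omega
  set n : ℕ := d - 2 with hn
  set Z : ℝ := ((k:ℝ)+1)*((d:ℝ)/2-1) - ((d:ℝ)-2) with hZ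
  set Y : ℝ := ((d:ℝ)-1)/2 + ((d:ℝ)/2-1)*((k:ℝ)+1) - ((d:ℝ)-2) with hY
  rw [sC_prod]
  have step1 : ∏ i ∈ Finset.range n, (sRho d i k * (sRho d i k + (d:ℝ) - 1)) =
      ∏ i ∈ Finset.range n, ((4:ℝ) * ((Z + ((n-1-i : ℕ):ℝ)) * (Y + ((n-1-i : ℕ):ℝ)))) := by
    refine Finset.prod_congr rfl fun i hi => ?_
    have hi' : i < n := Finset.mem_range.1 hi
    have hc1 : ((n-1-i : ℕ):ℝ) = ((n:ℕ):ℝ) - 1 - (i:ℝ) := by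
      rw [Nat.cast_sub (by omega), Nat.cast_sub (by omega)]
      push_cast; ring
    have hc2 : ((n:ℕ):ℝ) = (d:ℝ) - 2 := by
      rw [hn, Nat.cast_sub hd2]; push_cast; ring
    rw [hc1, hc2, sRho, hZ, hY]
    push_cast
    ring
  rw [step1]
  have step2 : ∏ i ∈ Finset.range n, ((4:ℝ) * ((Z + ((n-1-i : ℕ):ℝ)) * (Y + ((n-1-i : ℕ):ℝ)))) =
      (4:ℝ)^n * (∏ i ∈ Finset.range n, (Z + ((n-1-i : ℕ):ℝ))) *
        (∏ i ∈ Finset.range n, (Y + ((n-1-i : ℕ):ℝ))) := by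
    rw [Finset.prod_mul_distrib, Finset.prod_mul_distrib, Finset.prod_const,
      Finset.card_range]
    ring
  rw [step2, Finset.prod_range_reflect (fun i => Z + (i:ℝ)) n,
    Finset.prod_range_reflect (fun i => Y + (i:ℝ)) n]



set_option maxHeartbeats 2000000 in
/-- for `d ≥ 3`, `λ, c > 0`, the radial density
`f(w) = Σ_{k=1}^∞ (λ/(2c))^{k(d-2)} w^{k(d-2)-2} / (Γ(k(d/2-1)) Γ((d-1)/2 + (d/2-1)k))`
satisfies the non-homogeneous iterated hyper-Bessel ODE
`T^(d-2) f (w) = (λ/c)^{2(d-2)} f(w) + (2λ/c)^{d-2} w^{-d} / (√π Γ(1 - d/2))`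
for all `w > 0`, where `T g = g'' + (d/w) g'`.  (Mathlib's `Real.Gamma` vanishes
at nonpositive integers, so the inhomogeneous term vanishes for even `d ≥ 4`.) -/
theorem statement9 (d : ℕ) (hd : 3 ≤ d) (lam c : ℝ) (hlam : 0 < lam) (hc : 0 < c)
    (f : ℝ → ℝ)
    (hf : ∀ w : ℝ, f w = ∑' k : ℕ,
      (lam / (2 * c)) ^ ((k + 1) * (d - 2)) *
        w ^ ((((k : ℝ) + 1) * ((d : ℝ) - 2)) - 2) /
        (Real.Gamma (((k : ℝ) + 1) * ((d : ℝ) / 2 - 1)) *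
          Real.Gamma (((d : ℝ) - 1) / 2 + ((d : ℝ) / 2 - 1) * ((k : ℝ) + 1)))) :
    ∀ w : ℝ, 0 < w →
      (hyperBesselT d)^[d - 2] f w =
        (lam / c) ^ (2 * (d - 2)) * f w +
          (2 * lam / c) ^ (d - 2) * w ^ (-(d : ℝ)) /
            (Real.sqrt π * Real.Gamma (1 - (d : ℝ) / 2)) := by
  intro w hw
  have hd2 : (2:ℕ) ≤ d := by omega
  have hdR : (3:ℝ) ≤ (d:ℝ) := by exact_mod_cast hd
  have hnc : ((d-2:ℕ):ℝ) = (d:ℝ) - 2 := by rw [Nat.cast_sub hd2]; push_cast; ring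
  have hf' : ∀ x : ℝ, f x = ∑' k : ℕ, sA lam c d k * x ^ sRho d 0 k := by
    intro x; rw [hf x]
    refine tsum_congr fun k => ?_
    rw [sA, show sRho d 0 k = (((k:ℝ)+1) * ((d:ℝ)-2)) - 2 from by rw [sRho]; push_cast; ring]
    ring
  have key := iter_formula d hd lam c hlam hc f hf' (d-2) w hw
  set F : ℕ → ℝ := fun k => sA lam c d k * sC d (d-2) k * w ^ sRho d (d-2) k with hF
  have SF : Summable F := by
    refine Summable.of_norm_bounded (Hm d hd lam c hlam hc (d-2) 0 w hw) (fun k => le_of_eq ?_)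
    simp only [hF, Real.norm_eq_abs, pow_zero, mul_one, abs_mul,
      abs_of_nonneg (Real.rpow_nonneg hw.le (sRho d (d-2) k))]
  have SF1 : Summable (fun k => F (k+1)) := (summable_nat_add_iff 1).mpr SF
  -- Claim B : F 1 = 0
  have hB : F 1 = 0 := by
    have h0 : sRho d (d-3) 1 = 0 := by
      rw [sRho, Nat.cast_sub hd]; push_cast; ring
    have h1 : sC d (d-2) 1 = 0 := by
      rw [show d - 2 = (d-3)+1 from by omega,
        show sC d ((d-3)+1) 1 =
          sC d (d-3) 1 * (sRho d (d-3) 1 * (sRho d (d-3) 1 + (d:ℝ) - 1)) from rfl, h0]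
      ring
    simp only [hF]
    rw [h1]
    ring
  -- Claim C : shifting by two
  have hC : ∀ k : ℕ, F (k+2) = (lam/c)^(2*(d-2)) * (sA lam c d k * w ^ sRho d 0 k) := by
    intro k
    set z : ℝ := ((k:ℝ)+1)*((d:ℝ)/2-1) with hz
    set y : ℝ := ((d:ℝ)-1)/2 + ((d:ℝ)/2-1)*((k:ℝ)+1) with hy
    have hk0 : (0:ℝ) ≤ (k:ℝ) := Nat.cast_nonneg k
    have hzpos : 0 < z := by rw [hz]; nlinarith
    have hypos : 0 < y := by rw [hy]; nlinarith
    set Pz : ℝ := ∏ i ∈ Finset.range (d-2), (z + (i:ℝ)) with hPz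
    set Py : ℝ := ∏ i ∈ Finset.range (d-2), (y + (i:ℝ)) with hPy
    have hPzpos : 0 < Pz := Finset.prod_pos fun i _ => by
      have : (0:ℝ) ≤ (i:ℝ) := Nat.cast_nonneg i
      linarith
    have hPypos : 0 < Py := Finset.prod_pos fun i _ => by
      have : (0:ℝ) ≤ (i:ℝ) := Nat.cast_nonneg i
      linarith
    have hΓz : Real.Gamma ((((k+2:ℕ):ℝ)+1)*((d:ℝ)/2-1)) = Real.Gamma z * Pz := by
      have e : (((k+2:ℕ):ℝ)+1)*((d:ℝ)/2-1) = z + ((d-2:ℕ):ℝ) := by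
        rw [hnc, hz]; push_cast; ring
      rw [e, Gamma_shift (fun m => by
        have : (0:ℝ) ≤ (m:ℝ) := Nat.cast_nonneg m
        positivity) (d-2)]
    have hΓy : Real.Gamma (((d:ℝ)-1)/2 + ((d:ℝ)/2-1)*(((k+2:ℕ):ℝ)+1)) = Real.Gamma y * Py := by
      have e : ((d:ℝ)-1)/2 + ((d:ℝ)/2-1)*(((k+2:ℕ):ℝ)+1) = y + ((d-2:ℕ):ℝ) := by
        rw [hnc, hy]; push_cast; ring
      rw [e, Gamma_shift (fun m => by
        have : (0:ℝ) ≤ (m:ℝ) := Nat.cast_nonneg m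
        positivity) (d-2)]
    have hsCv : sC d (d-2) (k+2) = 4^(d-2) * Pz * Py := by
      rw [sC_form d hd (k+2)]
      congr 1
      · congr 1
        refine Finset.prod_congr rfl fun i _ => ?_
        rw [hz]; push_cast; ring
      · refine Finset.prod_congr rfl fun i _ => ?_
        rw [hy]; push_cast; ring
    have hrho : sRho d (d-2) (k+2) = sRho d 0 k := by
      rw [sRho, sRho, hnc]; push_cast; ring
    have hΓzpos : 0 < Real.Gamma z := Real.Gamma_pos_of_pos hzpos
    have hΓypos : 0 < Real.Gamma y := Real.Gamma_pos_of_pos hypos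
    have hXsplit : (lam/(2*c))^((k+2+1)*(d-2)) =
        (lam/(2*c))^((k+1)*(d-2)) * (lam/(2*c))^(2*(d-2)) := by
      rw [← pow_add]; congr 1; ring
    have hpow4 : (lam/(2*c))^(2*(d-2)) * 4^(d-2) = (lam/c)^(2*(d-2)) := by
      rw [pow_mul, pow_mul, ← mul_pow]
      congr 1
      field_simp
      ring
    simp only [hF, sA]
    rw [hΓz, hΓy, hsCv, hrho, hXsplit, ← hz, ← hy]
    field_simp
    rw [show (4:ℝ) = 2^2 from by norm_num, ← pow_mul]
    ring_nf
    rw [mul_assoc, ← mul_pow (1/2:ℝ) 2]; norm_num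
  -- Claim A : the k = 0 term
  have hA : F 0 = (2 * lam / c) ^ (d - 2) * w ^ (-(d : ℝ)) /
      (Real.sqrt π * Real.Gamma (1 - (d : ℝ) / 2)) := by
    have e1 : (((0:ℕ):ℝ)+1)*((d:ℝ)/2-1) = (d:ℝ)/2-1 := by norm_num
    have e2 : ((d:ℝ)-1)/2 + ((d:ℝ)/2-1)*(((0:ℕ):ℝ)+1) = (d:ℝ) - 3/2 := by push_cast; ring
    have hrho0 : sRho d (d-2) 0 = -(d:ℝ) := by rw [sRho, hnc]; push_cast; ring
    set P1 : ℝ := ∏ i ∈ Finset.range (d-2), ((1 - (d:ℝ)/2) + (i:ℝ)) with hP1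
    set P2 : ℝ := ∏ i ∈ Finset.range (d-2), ((1/2 : ℝ) + (i:ℝ)) with hP2
    have hsC0 : sC d (d-2) 0 = 4^(d-2) * P1 * P2 := by
      rw [sC_form d hd 0]
      congr 1
      · congr 1
        refine Finset.prod_congr rfl fun i _ => ?_
        push_cast; ring
      · refine Finset.prod_congr rfl fun i _ => ?_
        push_cast; ring
    have hP2pos : 0 < P2 := Finset.prod_pos fun i _ => by
      have : (0:ℝ) ≤ (i:ℝ) := Nat.cast_nonneg i
      linarith
    have hΓ32 : Real.Gamma ((d:ℝ) - 3/2) = Real.sqrt π * P2 := by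
      have e : (d:ℝ) - 3/2 = (1/2 : ℝ) + ((d-2:ℕ):ℝ) := by rw [hnc]; ring
      rw [e, Gamma_shift (fun m => by
        have : (0:ℝ) ≤ (m:ℝ) := Nat.cast_nonneg m
        positivity) (d-2), Real.Gamma_one_half_eq]
    rcases Nat.even_or_odd d with ⟨m, hm⟩ | hodd
    · -- even case : both sides vanish
      have hm2 : 2 ≤ m := by omega
      have hdm : (d:ℝ) = 2*(m:ℝ) := by rw [hm]; push_cast; ring
      have hRHS : Real.Gamma (1 - (d:ℝ)/2) = 0 := by
        have e : 1 - (d:ℝ)/2 = -((m-1:ℕ):ℝ) := by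
          rw [Nat.cast_sub (by omega)]; push_cast; rw [hdm]; ring
        rw [e, Real.Gamma_neg_nat_eq_zero]
      have hP10 : P1 = 0 := by
        refine Finset.prod_eq_zero (Finset.mem_range.2 (show m-1 < d-2 by omega)) ?_
        rw [Nat.cast_sub (by omega)]; push_cast; rw [hdm]; ring
      simp only [hF]
      rw [hsC0, hP10, hRHS]
      simp only [mul_zero, zero_mul, div_zero]
    · -- odd case
      have hne : ∀ m' : ℕ, (1 - (d:ℝ)/2) + (m':ℝ) ≠ 0 := by
        intro m' h
        have h2 : (d:ℝ) = 2*(m':ℝ) + 2 := by linarith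
        have h3 : d = 2*m' + 2 := by exact_mod_cast h2
        rcases hodd with ⟨t, ht⟩
        omega
      have hΓα : Real.Gamma ((d:ℝ)/2 - 1) = Real.Gamma (1 - (d:ℝ)/2) * P1 := by
        have e : (d:ℝ)/2 - 1 = (1 - (d:ℝ)/2) + ((d-2:ℕ):ℝ) := by rw [hnc]; ring
        rw [e, Gamma_shift hne (d-2)]
      have hP1ne : P1 ≠ 0 := by
        rw [hP1]
        exact Finset.prod_ne_zero_iff.2 fun i _ => hne i
      have hΓ1ne : Real.Gamma (1 - (d:ℝ)/2) ≠ 0 := by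
        refine Real.Gamma_ne_zero fun m' h => ?_
        exact hne m' (by rw [h]; ring)
      have hpow4 : (lam/(2*c))^(d-2) * 4^(d-2) = (2*lam/c)^(d-2) := by
        rw [← mul_pow]; congr 1; field_simp; ring
      have hsqrtpi : Real.sqrt π ≠ 0 := by
        have := Real.pi_pos
        positivity
      simp only [hF, sA]
      rw [e1, e2, hsC0, hrho0, hΓα, hΓ32]
      have hD : Real.Gamma (1-(d:ℝ)/2) * P1 * (Real.sqrt π * P2) ≠ 0 :=
        mul_ne_zero (mul_ne_zero hΓ1ne hP1ne) (mul_ne_zero hsqrtpi hP2pos.ne')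
      rw [show (0+1)*(d-2) = d-2 from by ring, ← hpow4,
        div_mul_eq_mul_div, div_mul_eq_mul_div,
        div_eq_div_iff hD (mul_ne_zero hsqrtpi hΓ1ne)]
      ring
  -- assemble
  rw [key]
  have efk : ∑' k, (sA lam c d k * sC d (d-2) k) * w ^ sRho d (d-2) k = ∑' k, F k :=
    tsum_congr fun k => rfl
  rw [efk, Summable.tsum_eq_zero_add SF, Summable.tsum_eq_zero_add SF1]
  have hsum2 : ∑' k, F (k+1+1) = (lam/c)^(2*(d-2)) * f w := by
    rw [tsum_congr (fun k => hC k), tsum_mul_left, ← hf' w]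
  rw [hsum2, hB, hA]
  ring
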